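/- Every Stieltjes matrix is a nonsingular matrix whose inverse has all entries nonnegative. -/

import Mathlib

open Matrix

/-- Every Stieltjes matrix (symmetric positive definite with nonpositive
off-diagonal entries) is nonsingular with entrywise nonnegative inverse. -/
theorem stieltjes_inverse_nonneg {n : ℕ} (A : Matrix (Fin n) (Fin n) ℝ)
    (hsym : Aᵀ = A) (hpd : A.PosDef)
    (hoff : ∀ i j, i ≠ j → A i j ≤ 0) :
    IsUnit A ∧ ∀ i j, 0 ≤ A⁻¹ i j := by
  have hdet : IsUnit A.det := isUnit_iff_ne_zero.mpr hpd.det_pos.ne'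
  have hu : IsUnit A := (Matrix.isUnit_iff_isUnit_det A).mpr hdet
  refine ⟨hu, ?_⟩
  intro i j
  set x : Fin n → ℝ := fun k => A⁻¹ k j with hxdef
  have hAx : A *ᵥ x = fun k => if k = j then (1 : ℝ) else 0 := by
    funext k
    have h1 : A * A⁻¹ = 1 := Matrix.mul_nonsing_inv A hdet
    have : (A *ᵥ x) k = (A * A⁻¹) k j := by
      simp [Matrix.mulVec, Matrix.mul_apply, dotProduct, hxdef]
    rw [this, h1]
    simp [Matrix.one_apply]
  set u : Fin n → ℝ := fun k => max (x k) 0 with hudef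
  set v : Fin n → ℝ := fun k => max (-(x k)) 0 with hvdef
  have hu0 : ∀ k, 0 ≤ u k := fun k => le_max_right _ _
  have hv0 : ∀ k, 0 ≤ v k := fun k => le_max_right _ _
  have huv : ∀ k, u k - v k = x k := by
    intro k
    rcases le_total (x k) 0 with h | h
    · simp [hudef, hvdef, max_eq_right h, max_eq_left (neg_nonneg.mpr h)]
    · simp [hudef, hvdef, max_eq_left h, max_eq_right (neg_nonpos.mpr h)]
  have hprod : ∀ k, u k * v k = 0 := by
    intro k
    rcases le_total (x k) 0 with h | h
    · simp [hudef, max_eq_right h]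
    · simp [hvdef, max_eq_right (neg_nonpos.mpr h)]
  -- key: v = 0
  have hv : v = 0 := by
    by_contra hne
    have hpos : 0 < star v ⬝ᵥ (A *ᵥ v) := hpd.dotProduct_mulVec_pos hne
    have hxuv : x = u - v := by funext k; simp [(huv k).symm]
    have hAxsplit : A *ᵥ v = A *ᵥ u - A *ᵥ x := by
      rw [hxuv, Matrix.mulVec_sub]; ring_nf
    have hvAx : v ⬝ᵥ (A *ᵥ x) = v j := by
      rw [hAx]
      simp [dotProduct]
    have hvAu : v ⬝ᵥ (A *ᵥ u) ≤ 0 := by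
      rw [dotProduct]
      apply Finset.sum_nonpos
      intro a _
      rw [Matrix.mulVec, dotProduct, Finset.mul_sum]
      apply Finset.sum_nonpos
      intro b _
      rcases eq_or_ne a b with rfl | hab
      · have h2 : v a * (A a a * u a) = A a a * (u a * v a) := by ring
        rw [h2, hprod a, mul_zero]
      · have h1 := hoff a b hab
        have h2 : v a * (A a b * u b) = A a b * (v a * u b) := by ring
        rw [h2]
        exact mul_nonpos_of_nonpos_of_nonneg h1 (mul_nonneg (hv0 a) (hu0 b))
    have hle : v ⬝ᵥ (A *ᵥ v) ≤ 0 := by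
      rw [hAxsplit, dotProduct_sub, hvAx]
      have := hv0 j
      linarith
    have : star v = v := by funext k; simp
    rw [this] at hpos
    linarith
  have := huv i
  rw [hv] at this
  simp at this
  have := hu0 i
  linarith [huv i, hu0 i]
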